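/- Let 0 < γ ≤ 2. For every ρ with −1 < ρ < 1 and every x with ρ + γ ≤ x ≤ 1, one has √(1−ρ²)·√(1−x²)/(1−ρx) ≤ (4−γ²)/(4+γ²), and (4−γ²)/(4+γ²) < 1. -/

import Mathlib

set_option autoImplicit false

/-- For `0 < γ ≤ 2`, for every `ρ ∈ (-1,1)` and every `x` with
`ρ + γ ≤ x ≤ 1`, one has `√(1-ρ²)·√(1-x²)/(1-ρx) ≤ (4-γ²)/(4+γ²)`, and
`(4-γ²)/(4+γ²) < 1`. -/
theorem stmt_0 (γ : ℝ) (hγ0 : 0 < γ) (hγ2 : γ ≤ 2) :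
    (∀ ρ x : ℝ, -1 < ρ → ρ < 1 → ρ + γ ≤ x → x ≤ 1 →
      Real.sqrt (1 - ρ ^ 2) * Real.sqrt (1 - x ^ 2) / (1 - ρ * x)
        ≤ (4 - γ ^ 2) / (4 + γ ^ 2)) ∧
    (4 - γ ^ 2) / (4 + γ ^ 2) < 1 := by
  have h4 : (0:ℝ) < 4 + γ ^ 2 := by positivity
  constructor
  · intro ρ x hρ1 hρ2 hx1 hx2
    have hx0 : -1 < x := by linarith
    have hρx : 0 < 1 - ρ * x := by nlinarith
    have hρ2' : (0:ℝ) ≤ 1 - ρ ^ 2 := by nlinarith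
    have hx2' : (0:ℝ) ≤ 1 - x ^ 2 := by nlinarith
    -- key inequality
    have hK : 4 * γ * (1 - ρ * x) ≤ (x - ρ) * (4 + γ ^ 2) := by
      nlinarith [sq_nonneg (ρ + x), mul_nonneg (mul_nonneg hγ0.le (by linarith : (0:ℝ) ≤ x - ρ)) (by linarith : (0:ℝ) ≤ x - ρ - γ), mul_nonneg (by linarith : (0:ℝ) ≤ 2 - γ) (by linarith : (0:ℝ) ≤ x - ρ - γ)]
    set c : ℝ := (4 - γ ^ 2) / (4 + γ ^ 2) with hc
    have hcc : c * (4 + γ ^ 2) = 4 - γ ^ 2 := by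
      rw [hc, div_mul_cancel₀ _ h4.ne']
    have hc0 : 0 ≤ c := by
      apply div_nonneg _ h4.le; nlinarith
    rw [div_le_iff₀ hρx, ← Real.sqrt_mul hρ2']
    have hB : 0 ≤ c * (1 - ρ * x) := mul_nonneg hc0 hρx.le
    rw [show c * (1 - ρ * x) = Real.sqrt ((c * (1 - ρ * x)) ^ 2) from (Real.sqrt_sq hB).symm]
    apply Real.sqrt_le_sqrt
    have hKsq := mul_le_mul hK hK (by positivity) (by nlinarith : (0:ℝ) ≤ (x - ρ) * (4 + γ ^ 2))
    rw [mul_pow, hc, div_pow, div_mul_eq_mul_div, le_div_iff₀ (by positivity : (0:ℝ) < (4 + γ ^ 2) ^ 2)]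
    nlinarith [hKsq]
  · rw [div_lt_one h4]; nlinarith
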